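/- The singular point 0 of f is 2-non-degenerate (i.e. 0 is non-degenerate, ηΛ(0) = 0, and d(ηΛ)_0(T_0S(f)) = ℝ^{n−m+1}) if and only if Λ(0) = 0, ηΛ(0) = 0, and rank d(Λ,ηΛ)_0 = 2(n−m+1). -/

import Mathlib

open Filter Topology Matrix

noncomputable section

/-- The `q`-th component of `f` (`0`-indexed), or `0` if `q` is out of range. -/
def comp {m n : ℕ} (f : (Fin m → ℝ) → (Fin n → ℝ)) (q : ℕ) : (Fin m → ℝ) → ℝ :=
  fun x => if h : q < n then f x ⟨q, h⟩ else 0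

/-- The `q`-th coordinate of `x` (`0`-indexed), or `0` if `q` is out of range. -/
def xhat {m : ℕ} (x : Fin m → ℝ) (q : ℕ) : ℝ := if h : q < m then x ⟨q, h⟩ else 0

/-- The partial derivative of `g` at `p` in the `q`-th coordinate direction. -/
def pd {m : ℕ} (g : (Fin m → ℝ) → ℝ) (p : Fin m → ℝ) (q : ℕ) : ℝ :=
  fderiv ℝ g p (fun l : Fin m => if l.val = q then 1 else 0)

/-- The Jacobian matrix of `f` at `p`; its rank is the rank of `df_p`. -/
def jac {m n : ℕ} (f : (Fin m → ℝ) → (Fin n → ℝ)) (p : Fin m → ℝ) : Matrix (Fin n) (Fin m) ℝ :=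
  Matrix.of fun i l => pd (comp f i.val) p l.val

/-- `lam f i` is the paper's `λ_{i+1}` (here `i` is `0`-indexed, `0 ≤ i ≤ n-m`):
the determinant of the `m×m` matrix whose rows are the gradients of
`f_0, …, f_{m-2}, f_{m-1+i}` (`0`-indexed components). -/
def lam {m n : ℕ} (f : (Fin m → ℝ) → (Fin n → ℝ)) (i : ℕ) (p : Fin m → ℝ) : ℝ :=
  Matrix.det (Matrix.of fun (k l : Fin m) =>
    pd (comp f (if k.val < m - 1 then k.val else m - 1 + i)) p l.val)

/-- `Λ = (λ_1, …, λ_{n-m+1}) : ℝ^m → ℝ^{n-m+1}`. -/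
def Lam {m n : ℕ} (f : (Fin m → ℝ) → (Fin n → ℝ)) (p : Fin m → ℝ) : Fin (n - m + 1) → ℝ :=
  fun i => lam f i.val p

/-- The Jacobian matrix of `Λ` at `p`. -/
def dLam {m n : ℕ} (f : (Fin m → ℝ) → (Fin n → ℝ)) (p : Fin m → ℝ) :
    Matrix (Fin (n - m + 1)) (Fin m) ℝ :=
  Matrix.of fun i l => pd (fun x => Lam f x i) p l.val

/-- `etaIter f η j = η^jΛ`, the `j`-fold iterated directional derivative of `Λ` along `η`. -/
def etaIter {m n : ℕ} (f : (Fin m → ℝ) → (Fin n → ℝ)) (η : (Fin m → ℝ) → (Fin m → ℝ)) :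
    ℕ → (Fin m → ℝ) → (Fin (n - m + 1) → ℝ)
  | 0 => Lam f
  | j + 1 => fun p => fderiv ℝ (etaIter f η j) p (η p)

/-- The Jacobian matrix of `(Λ, ηΛ, …, η^jΛ) : ℝ^m → ℝ^{(j+1)(n-m+1)}` at `p`. -/
def stackJac {m n : ℕ} (f : (Fin m → ℝ) → (Fin n → ℝ)) (η : (Fin m → ℝ) → (Fin m → ℝ))
    (j : ℕ) (p : Fin m → ℝ) : Matrix (Fin (j + 1) × Fin (n - m + 1)) (Fin m) ℝ :=
  Matrix.of fun si l => pd (fun x => etaIter f η si.1.val x si.2) p l.val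

/-- A diffeomorphism-germ `(ℝ^k,0) → (ℝ^k,0)`: it fixes `0`, is smooth at `0` and its
differential at `0` is invertible (so by the inverse function theorem it is a germ of a
diffeomorphism). -/
def IsDiffeoGerm {k : ℕ} (σ : (Fin k → ℝ) → (Fin k → ℝ)) : Prop :=
  σ 0 = 0 ∧ ContDiffAt ℝ (⊤ : ℕ∞) σ 0 ∧ LinearMap.det ((fderiv ℝ σ 0).toLinearMap) ≠ 0

/-- An orientation-preserving diffeomorphism-germ `(ℝ^k,0) → (ℝ^k,0)`. -/
def IsOPDiffeoGerm {k : ℕ} (σ : (Fin k → ℝ) → (Fin k → ℝ)) : Prop :=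
  σ 0 = 0 ∧ ContDiffAt ℝ (⊤ : ℕ∞) σ 0 ∧ 0 < LinearMap.det ((fderiv ℝ σ 0).toLinearMap)

/-- `A`-equivalence of map-germs at `0`. -/
def AEquiv {m n : ℕ} (f g : (Fin m → ℝ) → (Fin n → ℝ)) : Prop :=
  ∃ (φ : (Fin m → ℝ) → (Fin m → ℝ)) (Φ : (Fin n → ℝ) → (Fin n → ℝ)),
    IsDiffeoGerm φ ∧ IsDiffeoGerm Φ ∧ ∀ᶠ x in 𝓝 0, Φ (f (φ x)) = g x

/-- The Morin normal form `h_{0,r} : (ℝ^m,0) → (ℝ^n,0)` (all indices `0`-indexed):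
`h_{0,r}(x) = (x_1, …, x_{m-1}, h_1(x), …, h_{n-m+1}(x))` with
`h_i(x) = Σ_{j=1}^r x_{(i-1)r+j} x_m^j` for `i = 1, …, n-m` and
`h_{n-m+1}(x) = Σ_{j=1}^{r-1} x_{(n-m)r+j} x_m^j + x_m^{r+1}`. -/
def hMorinNF (m n r : ℕ) : (Fin m → ℝ) → (Fin n → ℝ) := fun x k =>
  if k.val < m - 1 then xhat x k.val
  else if k.val - (m - 1) < n - m then
    ∑ j ∈ Finset.range r, xhat x ((k.val - (m - 1)) * r + j) * (xhat x (m - 1)) ^ (j + 1)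
  else
    (∑ j ∈ Finset.range (r - 1), xhat x ((n - m) * r + j) * (xhat x (m - 1)) ^ (j + 1))
      + (xhat x (m - 1)) ^ (r + 1)

/-- The normal form `h_{r,(ε₁,ε₂)}(x) = (ε₁x_1, x_2, …, x_{m-1},
ε₁x_1x_m + Σ_{j=2}^r x_jx_m^j, h_2(x), …, h_{n-m}(x), ε₂h_{n-m+1}(x))`. -/
def hSign (m n r : ℕ) (e1 e2 : ℝ) : (Fin m → ℝ) → (Fin n → ℝ) := fun x k =>
  if k.val = 0 then e1 * xhat x 0
  else if k.val < m - 1 then xhat x k.val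
  else if k.val = m - 1 then
    e1 * xhat x 0 * xhat x (m - 1)
      + ∑ j ∈ Finset.Ico 1 r, xhat x j * (xhat x (m - 1)) ^ (j + 1)
  else if k.val - (m - 1) < n - m then
    ∑ j ∈ Finset.range r, xhat x ((k.val - (m - 1)) * r + j) * (xhat x (m - 1)) ^ (j + 1)
  else
    e2 * ((∑ j ∈ Finset.range (r - 1), xhat x ((n - m) * r + j) * (xhat x (m - 1)) ^ (j + 1))
      + (xhat x (m - 1)) ^ (r + 1))


section AuxLemmas

lemma comp_contDiff' {m n : ℕ} (f : (Fin m → ℝ) → (Fin n → ℝ)) (hf : ContDiff ℝ (⊤:ℕ∞) f)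
    (q : ℕ) : ContDiff ℝ (⊤:ℕ∞) (comp f q) := by
  unfold _root_.comp
  by_cases h : q < n
  · simpa [h] using (contDiff_pi.mp hf ⟨q, h⟩)
  · simpa [h] using contDiff_const

lemma pd_contDiff' {m : ℕ} (g : (Fin m → ℝ) → ℝ) (hg : ContDiff ℝ (⊤:ℕ∞) g) (q : ℕ) :
    ContDiff ℝ (⊤:ℕ∞) (fun p => pd g p q) :=
  (hg.fderiv_right (by exact_mod_cast le_top)).clm_apply contDiff_const

lemma contDiff_finsetProd' {m : ℕ} {ι : Type*} (s : Finset ι) (g : ι → (Fin m → ℝ) → ℝ)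
    (h : ∀ i ∈ s, ContDiff ℝ (⊤:ℕ∞) (g i)) :
    ContDiff ℝ (⊤:ℕ∞) (fun x => ∏ i ∈ s, g i x) := by
  classical
  induction s using Finset.induction_on with
  | empty => simpa using contDiff_const
  | insert a s hi ih =>
    simp only [Finset.prod_insert hi]
    exact (h a (Finset.mem_insert_self a s)).mul
      (ih fun i hi' => h i (Finset.mem_insert_of_mem hi'))

lemma lam_contDiff' {m n : ℕ} (f : (Fin m → ℝ) → (Fin n → ℝ)) (hf : ContDiff ℝ (⊤:ℕ∞) f)
    (i : ℕ) : ContDiff ℝ (⊤:ℕ∞) (lam f i) := by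
  unfold lam
  simp only [Matrix.det_apply', Matrix.of_apply]
  exact ContDiff.sum fun σ _ => contDiff_const.mul
    (contDiff_finsetProd' _ _ fun k _ => pd_contDiff' _ (comp_contDiff' f hf _) _)

lemma Lam_contDiff' {m n : ℕ} (f : (Fin m → ℝ) → (Fin n → ℝ)) (hf : ContDiff ℝ (⊤:ℕ∞) f) :
    ContDiff ℝ (⊤:ℕ∞) (Lam f) :=
  contDiff_pi.mpr fun i => lam_contDiff' f hf i.val

lemma etaIter_contDiff' {m n : ℕ} (f : (Fin m → ℝ) → (Fin n → ℝ))
    (η : (Fin m → ℝ) → (Fin m → ℝ)) (hf : ContDiff ℝ (⊤:ℕ∞) f) (hη : ContDiff ℝ (⊤:ℕ∞) η)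
    (j : ℕ) : ContDiff ℝ (⊤:ℕ∞) (etaIter f η j) := by
  induction j with
  | zero => exact Lam_contDiff' f hf
  | succ j ih =>
    show ContDiff ℝ (⊤:ℕ∞) fun p => fderiv ℝ (etaIter f η j) p (η p)
    exact (ih.fderiv_right (by exact_mod_cast le_top)).clm_apply hη

lemma clm_sum_eq' {m : ℕ} (L : (Fin m → ℝ) →L[ℝ] ℝ) (v : Fin m → ℝ) :
    ∑ l : Fin m, L (fun l' : Fin m => if l'.val = l.val then 1 else 0) * v l = L v := by
  have hv : v = ∑ l : Fin m, v l • (fun l' : Fin m => if l'.val = l.val then (1:ℝ) else 0) := by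
    funext l'
    simp [Finset.sum_apply, Fin.val_eq_val, eq_comm]
  conv_rhs => rw [hv, map_sum]
  refine Finset.sum_congr rfl fun l _ => ?_
  rw [L.map_smul, smul_eq_mul, mul_comm]

lemma mulVec_pd' {m : ℕ} {ι : Type*} [Fintype ι] (h : ι → (Fin m → ℝ) → ℝ) (p : Fin m → ℝ)
    (v : Fin m → ℝ) (i : ι) :
    (Matrix.of fun (i : ι) (l : Fin m) => pd (h i) p l.val).mulVec v i
      = fderiv ℝ (h i) p v := by
  simp only [Matrix.mulVec, dotProduct, Matrix.of_apply, pd]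
  exact clm_sum_eq' _ v

lemma fderiv_comp_pi' {m : ℕ} {ι : Type*} [Fintype ι] (g : (Fin m → ℝ) → (ι → ℝ))
    (p : Fin m → ℝ) (hg : DifferentiableAt ℝ g p) (i : ι) (v : Fin m → ℝ) :
    fderiv ℝ (fun x => g x i) p v = fderiv ℝ g p v i := by
  have h : ∀ j, DifferentiableAt ℝ (fun x => g x j) p := differentiableAt_pi.mp hg
  have h2 : fderiv ℝ g p = ContinuousLinearMap.pi fun j => fderiv ℝ (fun x => g x j) p :=
    fderiv_pi h
  rw [h2, ContinuousLinearMap.pi_apply]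

lemma rank_eq_card_iff_surj' {ι : Type*} [Fintype ι] {c : ℕ} (M : Matrix ι (Fin c) ℝ) :
    M.rank = Fintype.card ι ↔ Function.Surjective M.mulVec := by
  constructor
  · intro h
    have ht : LinearMap.range M.mulVecLin = ⊤ := by
      apply Submodule.eq_top_of_finrank_eq
      rw [← Matrix.rank, h, Module.finrank_fintype_fun_eq_card]
    intro w
    obtain ⟨v, hv⟩ := LinearMap.range_eq_top.mp ht w
    exact ⟨v, hv⟩
  · intro h
    have ht : LinearMap.range M.mulVecLin = ⊤ := LinearMap.range_eq_top.mpr h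
    rw [Matrix.rank, ht, finrank_top, Module.finrank_fintype_fun_eq_card]

end AuxLemmas

/-- `0` is `2`-non-degenerate (`0` is non-degenerate, `ηΛ(0) = 0`, and
`d(ηΛ)_0(T_0S(f)) = ℝ^{n-m+1}`, where `T_0S(f) = ker dΛ_0`) if and only if `Λ(0) = 0`,
`ηΛ(0) = 0` and `rank d(Λ,ηΛ)_0 = 2(n-m+1)`. -/
theorem stmt5 {m n : ℕ} (hm : 0 < m) (hmn : m < n)
    (f : (Fin m → ℝ) → (Fin n → ℝ))
    (hf : ContDiff ℝ (⊤ : ℕ∞) f) (hf0 : f 0 = 0)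
    (hrankf : Matrix.rank (jac f 0) = m - 1)
    (hnorm1 : Matrix.rank (Matrix.of fun (k : Fin (m - 1)) (l : Fin m) =>
      pd (comp f k.val) 0 l.val) = m - 1)
    (hnorm2 : ∀ i : Fin (n - m + 1), ∀ l : Fin m, pd (comp f (m - 1 + i.val)) 0 l.val = 0)
    (η : (Fin m → ℝ) → (Fin m → ℝ)) (hηs : ContDiff ℝ (⊤ : ℕ∞) η)
    (hηker : ∀ᶠ p in 𝓝 (0 : Fin m → ℝ), Matrix.rank (jac f p) < m →
      LinearMap.ker (fderiv ℝ f p).toLinearMap = Submodule.span ℝ {η p}) :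
    (Matrix.rank (dLam f 0) = n - m + 1 ∧ etaIter f η 1 0 = 0 ∧
        Submodule.map (fderiv ℝ (etaIter f η 1) 0).toLinearMap
          (LinearMap.ker (fderiv ℝ (Lam f) 0).toLinearMap) = ⊤) ↔
      (Lam f 0 = 0 ∧ etaIter f η 1 0 = 0 ∧
        Matrix.rank (stackJac f η 1 0) = 2 * (n - m + 1)) := by
  classical
  -- Λ(0) = 0 always holds, from hnorm2
  have hLam0 : Lam f 0 = 0 := by
    funext i
    show lam f i.val 0 = 0
    unfold lam
    refine Matrix.det_eq_zero_of_row_eq_zero ⟨m - 1, Nat.sub_lt hm one_pos⟩ fun l => ?_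
    simp only [Matrix.of_apply, lt_irrefl, if_false]
    exact hnorm2 i l
  have hLamS : ContDiff ℝ (⊤:ℕ∞) (Lam f) := Lam_contDiff' f hf
  have hEtaS : ContDiff ℝ (⊤:ℕ∞) (etaIter f η 1) := etaIter_contDiff' f η hf hηs 1
  have hone : (1 : WithTop ℕ∞) ≤ ((⊤:ℕ∞) : WithTop ℕ∞) := by exact_mod_cast le_top
  have hLamD : DifferentiableAt ℝ (Lam f) 0 := (hLamS.differentiable (by simp)) 0
  have hEtaD : DifferentiableAt ℝ (etaIter f η 1) 0 := (hEtaS.differentiable (by simp)) 0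
  set A := fderiv ℝ (Lam f) 0 with hAdef
  set B := fderiv ℝ (etaIter f η 1) 0 with hBdef
  -- mulVec of dLam
  have hdLam : ∀ v i, (dLam f 0).mulVec v i = A v i := by
    intro v i
    rw [show dLam f 0 = Matrix.of fun i l => pd (fun x => Lam f x i) 0 l.val from rfl,
      mulVec_pd' (fun i x => Lam f x i) 0 v i]
    exact fderiv_comp_pi' (Lam f) 0 hLamD i v
  -- mulVec of stackJac
  have hdS : ∀ v (si : Fin 2 × Fin (n - m + 1)), (stackJac f η 1 0).mulVec v si =
      if si.1.val = 0 then A v si.2 else B v si.2 := by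
    intro v si
    rw [show stackJac f η 1 0
        = Matrix.of fun (si : Fin 2 × Fin (n - m + 1)) l =>
            pd (fun x => etaIter f η si.1.val x si.2) 0 l.val from rfl,
      mulVec_pd' (fun (si : Fin 2 × Fin (n - m + 1)) x => etaIter f η si.1.val x si.2) 0 v si]
    have h01 : si.1.val = 0 ∨ si.1.val = 1 := by omega
    rcases h01 with h0 | h1
    · rw [h0, if_pos rfl]
      exact fderiv_comp_pi' (Lam f) 0 hLamD si.2 v
    · rw [h1, if_neg one_ne_zero]
      exact fderiv_comp_pi' (etaIter f η 1) 0 hEtaD si.2 v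
  -- rank characterizations
  have hr1 : Matrix.rank (dLam f 0) = n - m + 1 ↔ Function.Surjective (fun v => A v) := by
    have h := rank_eq_card_iff_surj' (dLam f 0)
    rw [Fintype.card_fin] at h
    rw [h]
    constructor
    · intro hs w
      obtain ⟨v, hv⟩ := hs w
      exact ⟨v, funext fun i => (hdLam v i).symm.trans (congrFun hv i)⟩
    · intro hs w
      obtain ⟨v, hv⟩ := hs w
      exact ⟨v, funext fun i => (hdLam v i).trans (congrFun hv i)⟩
  have hr2 : Matrix.rank (stackJac f η 1 0) = 2 * (n - m + 1) ↔
      Function.Surjective (fun v (si : Fin 2 × Fin (n - m + 1)) =>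
        if si.1.val = 0 then A v si.2 else B v si.2) := by
    have h := rank_eq_card_iff_surj' (stackJac f η 1 0)
    rw [Fintype.card_prod, Fintype.card_fin, Fintype.card_fin] at h
    rw [h]
    constructor
    · intro hs w
      obtain ⟨v, hv⟩ := hs w
      exact ⟨v, funext fun si => (hdS v si).symm.trans (congrFun hv si)⟩
    · intro hs w
      obtain ⟨v, hv⟩ := hs w
      exact ⟨v, funext fun si => (hdS v si).trans (congrFun hv si)⟩
  constructor
  · rintro ⟨h1, h2, h3⟩
    refine ⟨hLam0, h2, hr2.mpr ?_⟩
    have hAsurj : Function.Surjective (fun v => A v) := hr1.mp h1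
    intro w
    obtain ⟨x, hx0⟩ := hAsurj (fun j => w (0, j))
    have hx : A x = fun j => w (0, j) := hx0
    have hmem : (fun j => w (1, j)) - B x ∈
        Submodule.map B.toLinearMap (LinearMap.ker A.toLinearMap) := by rw [h3]; trivial
    obtain ⟨y, hy, hBy⟩ := Submodule.mem_map.mp hmem
    have hAy : A y = 0 := LinearMap.mem_ker.mp hy
    refine ⟨x + y, ?_⟩
    funext si
    obtain ⟨s1, s2⟩ := si
    have h01 : s1.val = 0 ∨ s1.val = 1 := by omega
    rcases h01 with h0 | h1'
    · have hs1 : s1 = 0 := Fin.ext h0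
      subst hs1
      simp only [if_pos rfl]
      have : A (x + y) s2 = A x s2 + A y s2 := by rw [map_add]; rfl
      rw [this, hAy, hx]
      simp
    · have hs1 : s1 = 1 := Fin.ext h1'
      subst hs1
      simp only [Fin.val_one, if_neg one_ne_zero]
      have : B (x + y) s2 = B x s2 + B y s2 := by rw [map_add]; rfl
      rw [this]
      have := congrFun hBy s2
      simp only [Pi.sub_apply, ContinuousLinearMap.coe_coe] at this
      linarith [this]
  · rintro ⟨_, h2, h3⟩
    have hs := hr2.mp h3
    have hAsurj : Function.Surjective (fun v => A v) := by
      intro u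
      obtain ⟨v, hv⟩ := hs (fun si => if si.1.val = 0 then u si.2 else 0)
      refine ⟨v, funext fun j => ?_⟩
      have := congrFun hv ((0 : Fin 2), j)
      simpa using this
    refine ⟨hr1.mpr hAsurj, h2, ?_⟩
    rw [Submodule.eq_top_iff']
    intro w
    obtain ⟨v, hv⟩ := hs (fun si => if si.1.val = 0 then 0 else w si.2)
    refine Submodule.mem_map.mpr ⟨v, LinearMap.mem_ker.mpr ?_, ?_⟩
    · funext j
      have := congrFun hv ((0 : Fin 2), j)
      simpa using this
    · funext j
      have := congrFun hv ((1 : Fin 2), j)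
      simpa using this
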